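/- Let d be a standard n-distance on X that is repetition invariant, let k ∈ {2,…,n-1} and p ∈ {0,…,n-k}. Then for all x₁,…,x_k,z ∈ X: d(x₁,…,x_{k-1}, x_k,…,x_k) ≤ ((k+p)/((k-1)(k+p-1)))·∑_{i=1}^{k-1} d(x₁,…,x_{k-1},x_k,…,x_k)ᵢᶻ + ((p+1)/((k-1)(k+p-1)))·d(x₁,…,x_{k-1},z,…,z), where x_k fills positions k through n and z fills positions k through n in the last term. -/

import Mathlib

open Finset Function

private lemma card_filter_lt_fin (n m : ℕ) (h : m ≤ n) :
    ((univ : Finset (Fin n)).filter (fun i => i.val < m)).card = m := by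
  rw [Finset.card_filter]
  rw [Fin.sum_univ_eq_sum_range (fun j => if j < m then 1 else 0)]
  rw [← Finset.card_filter]
  have : (range n).filter (· < m) = range m := by ext j; simp; omega
  rw [this, Finset.card_range]

/-- `d` is an `n`-distance: nonnegative, vanishing exactly on constant tuples,
symmetric, and satisfying the simplex inequality. -/
structure IsNDistance {X : Type*} {n : ℕ} (d : (Fin n → X) → ℝ) : Prop where
  nonneg : ∀ x, 0 ≤ d x
  eq_zero_iff : ∀ x, d x = 0 ↔ ∀ i j : Fin n, x i = x j
  symm : ∀ (x : Fin n → X) (σ : Equiv.Perm (Fin n)), d (x ∘ σ) = d x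
  simplex : ∀ (x : Fin n → X) (z : X), d x ≤ ∑ i, d (Function.update x i z)

set_option maxHeartbeats 1000000 in
/-- Key lemma for standard repetition-invariant $n$-distances. -/
theorem standard_repInv_lemma {X : Type*} {n : ℕ} (hn : 3 ≤ n)
    (d : (Fin n → X) → ℝ) (hd : IsNDistance d)
    (hstd : ∀ (x : Fin n → X) (z : X),
      d x ≤ (1 / ((n : ℝ) - 1)) * ∑ i, d (Function.update x i z))
    (hrep : ∀ x y : Fin n → X, Set.range x = Set.range y → d x = d y)
    (k p : ℕ) (hk2 : 2 ≤ k) (hkn : k ≤ n - 1) (hp : p ≤ n - k)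
    (x : Fin k → X) (z : X) :
    d (fun i : Fin n => x ⟨min i.val (k - 1), by omega⟩) ≤
      (((k : ℝ) + p) / (((k : ℝ) - 1) * ((k : ℝ) + (p : ℝ) - 1))) *
        ∑ i ∈ Finset.univ.filter (fun i : Fin n => (i : ℕ) < k - 1),
          d (Function.update (fun i : Fin n => x ⟨min i.val (k - 1), by omega⟩) i z)
      + (((p : ℝ) + 1) / (((k : ℝ) - 1) * ((k : ℝ) + (p : ℝ) - 1))) *
          d (fun i : Fin n => if h : (i : ℕ) < k - 1 then x ⟨i.val, by omega⟩ else z) := by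
  have hk1 : k - 1 < k := by omega
  have hkn' : k - 1 < n := by omega
  have hkn2 : k < n := by omega
  have hn1 : n - 1 < n := by omega
  -- the four relevant tuples
  set y : Fin n → X := fun i : Fin n => x ⟨min i.val (k - 1), by omega⟩ with hy
  set w : Fin n → X := fun i : Fin n =>
    if h : (i : ℕ) < k - 1 then x ⟨i.val, by omega⟩ else z with hw
  set t : Fin n → X := fun i : Fin n => if h : (i : ℕ) < k then x ⟨i.val, h⟩ else z with ht
  set u : Fin n → X := fun i : Fin n => if h : (i : ℕ) < k - 1 then x ⟨i.val, by omega⟩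
    else if (i : ℕ) < n - 1 then x ⟨k - 1, hk1⟩ else z with hu
  set xk : X := x ⟨k - 1, hk1⟩ with hxk
  set A := d y with hA
  set B := d t with hB
  set D := d w with hD
  set S := ∑ i ∈ Finset.univ.filter (fun i : Fin n => (i : ℕ) < k - 1),
      d (Function.update y i z) with hS
  -- target sets
  set Rz : Set X := Set.range x ∪ {z} with hRz
  -- basic tuple values
  have yval : ∀ j : Fin n, y j = x ⟨min j.val (k - 1), by omega⟩ := fun j => rfl
  have tval1 : ∀ j : Fin n, (h : j.val < k) → t j = x ⟨j.val, h⟩ := fun j h => dif_pos h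
  have tval2 : ∀ j : Fin n, ¬ j.val < k → t j = z := fun j h => dif_neg h
  have wval1 : ∀ j : Fin n, (h : j.val < k - 1) → w j = x ⟨j.val, by omega⟩ := fun j h => dif_pos h
  have wval2 : ∀ j : Fin n, ¬ j.val < k - 1 → w j = z := fun j h => dif_neg h
  have uval1 : ∀ j : Fin n, (h : j.val < k - 1) → u j = x ⟨j.val, by omega⟩ := fun j h => dif_pos h
  have uval2 : ∀ j : Fin n, ¬ j.val < k - 1 → j.val < n - 1 → u j = xk := by
    intro j h1 h2; rw [hu]; simp only [dif_neg h1, if_pos h2, hxk]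
  have uval3 : ∀ j : Fin n, ¬ j.val < n - 1 → u j = z := by
    intro j h2
    have h1 : ¬ j.val < k - 1 := by omega
    rw [hu]; simp only [dif_neg h1, if_neg h2]
  -- ranges
  have hry : Set.range y = Set.range x := by
    apply Set.eq_of_subset_of_subset
    · rintro a ⟨j, rfl⟩; exact ⟨_, rfl⟩
    · rintro a ⟨m, rfl⟩
      refine ⟨⟨m.val, by omega⟩, ?_⟩
      rw [yval]
      congr 1
      exact Fin.ext (by simp; omega)
  have hrt : Set.range t = Rz := by
    apply Set.eq_of_subset_of_subset
    · rintro a ⟨j, rfl⟩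
      by_cases h : j.val < k
      · rw [tval1 j h]; exact Or.inl ⟨_, rfl⟩
      · rw [tval2 j h]; exact Or.inr rfl
    · rintro a (⟨m, rfl⟩ | rfl)
      · refine ⟨⟨m.val, by omega⟩, ?_⟩
        rw [tval1 _ m.isLt]
      · exact ⟨⟨n - 1, hn1⟩, tval2 _ (show ¬ (n - 1 < k) by omega)⟩
  have hru : Set.range u = Rz := by
    apply Set.eq_of_subset_of_subset
    · rintro a ⟨j, rfl⟩
      by_cases h1 : j.val < k - 1
      · rw [uval1 j h1]; exact Or.inl ⟨_, rfl⟩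
      · by_cases h2 : j.val < n - 1
        · rw [uval2 j h1 h2]; exact Or.inl ⟨_, rfl⟩
        · rw [uval3 j h2]; exact Or.inr rfl
    · rintro a (⟨m, rfl⟩ | rfl)
      · by_cases h1 : m.val < k - 1
        · refine ⟨⟨m.val, by omega⟩, ?_⟩
          rw [uval1 _ h1]
        · refine ⟨⟨k - 1, hkn'⟩, ?_⟩
          rw [uval2 _ (show ¬ (k - 1 < k - 1) by omega) (show k - 1 < n - 1 by omega), hxk]
          congr 1; exact Fin.ext (show k - 1 = m.val by omega)
      · exact ⟨⟨n - 1, hn1⟩, uval3 _ (by simp)⟩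
  have hrw : Set.range w = (x '' {m : Fin k | m.val < k - 1}) ∪ {z} := by
    apply Set.eq_of_subset_of_subset
    · rintro a ⟨j, rfl⟩
      by_cases h : j.val < k - 1
      · rw [wval1 j h]; exact Or.inl ⟨_, by simpa using h, rfl⟩
      · rw [wval2 j h]; exact Or.inr rfl
    · rintro a (⟨m, hm, rfl⟩ | rfl)
      · refine ⟨⟨m.val, by omega⟩, ?_⟩
        rw [wval1 _ (by simpa using hm)]
      · exact ⟨⟨n - 1, hn1⟩, wval2 _ (show ¬ (n - 1 < k - 1) by omega)⟩
  -- ranges of updated tuples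
  have h_upd_y : ∀ i : Fin n, i.val < k - 1 → Set.range (update y i z) = (x '' {m : Fin k | m.val ≠ i.val}) ∪ {z} := by
    intro i hi
    apply Set.eq_of_subset_of_subset
    · rintro a ⟨j, rfl⟩
      by_cases hj : j = i
      · subst hj; rw [Function.update_self]; exact Or.inr rfl
      · rw [Function.update_of_ne hj, yval]
        refine Or.inl ⟨_, ?_, rfl⟩
        simp only [Set.mem_setOf_eq]
        intro hcon
        exact hj (Fin.ext (by have hcon' : min j.val (k - 1) = i.val := hcon; omega))
    · rintro a (⟨m, hm, rfl⟩ | rfl)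
      · simp only [Set.mem_setOf_eq] at hm
        by_cases h1 : m.val < k - 1
        · refine ⟨⟨m.val, by omega⟩, ?_⟩
          rw [Function.update_of_ne (by intro hcon; apply hm; rw [← hcon]), yval]
          congr 1; exact Fin.ext (by simp; omega)
        · refine ⟨⟨n - 1, hn1⟩, ?_⟩
          rw [Function.update_of_ne (by intro hcon; have := congrArg Fin.val hcon; simp at this; omega), yval]
          congr 1; exact Fin.ext (by simp; omega)
      · exact ⟨i, Function.update_self i _ y⟩
  have h_upd_t : ∀ i : Fin n, i.val < k - 1 → Set.range (update t i z) = (x '' {m : Fin k | m.val ≠ i.val}) ∪ {z} := by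
    intro i hi
    apply Set.eq_of_subset_of_subset
    · rintro a ⟨j, rfl⟩
      by_cases hj : j = i
      · subst hj; rw [Function.update_self]; exact Or.inr rfl
      · rw [Function.update_of_ne hj]
        by_cases h : j.val < k
        · rw [tval1 j h]
          refine Or.inl ⟨_, ?_, rfl⟩
          simp only [Set.mem_setOf_eq]
          intro hcon; exact hj (Fin.ext (by simpa using hcon))
        · rw [tval2 j h]; exact Or.inr rfl
    · rintro a (⟨m, hm, rfl⟩ | rfl)
      · simp only [Set.mem_setOf_eq] at hm
        refine ⟨⟨m.val, by omega⟩, ?_⟩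
        rw [Function.update_of_ne (by intro hcon; apply hm; have := congrArg Fin.val hcon; simpa using this), tval1 _ m.isLt]
      · exact ⟨i, Function.update_self i _ t⟩
  have h_upd_u : ∀ i : Fin n, i.val < k - 1 → Set.range (update u i xk) = (x '' {m : Fin k | m.val ≠ i.val}) ∪ {z} := by
    intro i hi
    apply Set.eq_of_subset_of_subset
    · rintro a ⟨j, rfl⟩
      by_cases hj : j = i
      · subst hj; rw [Function.update_self, hxk]
        exact Or.inl ⟨_, by simp only [Set.mem_setOf_eq]; omega, rfl⟩
      · rw [Function.update_of_ne hj]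
        by_cases h1 : j.val < k - 1
        · rw [uval1 j h1]
          refine Or.inl ⟨_, ?_, rfl⟩
          simp only [Set.mem_setOf_eq]
          intro hcon; exact hj (Fin.ext (by simpa using hcon))
        · by_cases h2 : j.val < n - 1
          · rw [uval2 j h1 h2, hxk]
            exact Or.inl ⟨_, by simp only [Set.mem_setOf_eq]; simp; omega, rfl⟩
          · rw [uval3 j h2]; exact Or.inr rfl
    · rintro a (⟨m, hm, rfl⟩ | rfl)
      · simp only [Set.mem_setOf_eq] at hm
        by_cases h1 : m.val < k - 1
        · refine ⟨⟨m.val, by omega⟩, ?_⟩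
          rw [Function.update_of_ne (by intro hcon; apply hm; have := congrArg Fin.val hcon; simpa using this), uval1 _ h1]
        · refine ⟨⟨k - 1, hkn'⟩, ?_⟩
          rw [Function.update_of_ne (by intro hcon; have := congrArg Fin.val hcon; simp at this; omega), uval2 _ (show ¬ (k - 1 < k - 1) by omega) (show k - 1 < n - 1 by omega), hxk]
          congr 1; exact Fin.ext (by simp; omega)
      · refine ⟨⟨n - 1, hn1⟩, ?_⟩
        rw [Function.update_of_ne (by intro hcon; have := congrArg Fin.val hcon; simp at this; omega), uval3 _ (by simp)]
  have h_upd_y2 : ∀ i : Fin n, ¬ i.val < k - 1 → Set.range (update y i z) = Rz := by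
    intro i hi
    apply Set.eq_of_subset_of_subset
    · rintro a ⟨j, rfl⟩
      by_cases hj : j = i
      · subst hj; rw [Function.update_self]; exact Or.inr rfl
      · rw [Function.update_of_ne hj, yval]; exact Or.inl ⟨_, rfl⟩
    · rintro a (⟨m, rfl⟩ | rfl)
      · by_cases h1 : m.val < k - 1
        · refine ⟨⟨m.val, by omega⟩, ?_⟩
          rw [Function.update_of_ne (by intro hcon; have := congrArg Fin.val hcon; simp at this; omega), yval]
          congr 1; exact Fin.ext (by simp; omega)
        · by_cases h2 : i.val = k - 1
          · refine ⟨⟨n - 1, hn1⟩, ?_⟩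
            rw [Function.update_of_ne (by intro hcon; have := congrArg Fin.val hcon; simp at this; omega), yval]
            congr 1; exact Fin.ext (by simp; omega)
          · refine ⟨⟨k - 1, hkn'⟩, ?_⟩
            rw [Function.update_of_ne (by intro hcon; have := congrArg Fin.val hcon; simp at this; omega), yval]
            congr 1; exact Fin.ext (by simp; omega)
      · exact ⟨i, Function.update_self i _ y⟩
  have h_upd_t2 : Set.range (update t ⟨k - 1, hkn'⟩ z) = (x '' {m : Fin k | m.val < k - 1}) ∪ {z} := by
    apply Set.eq_of_subset_of_subset
    · rintro a ⟨j, rfl⟩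
      by_cases hj : j = ⟨k - 1, hkn'⟩
      · subst hj; rw [Function.update_self]; exact Or.inr rfl
      · rw [Function.update_of_ne hj]
        by_cases h : j.val < k
        · rw [tval1 j h]
          refine Or.inl ⟨_, ?_, rfl⟩
          simp only [Set.mem_setOf_eq]
          have : j.val ≠ k - 1 := by intro hcon; exact hj (Fin.ext (by simpa using hcon))
          omega
        · rw [tval2 j h]; exact Or.inr rfl
    · rintro a (⟨m, hm, rfl⟩ | rfl)
      · simp only [Set.mem_setOf_eq] at hm
        refine ⟨⟨m.val, by omega⟩, ?_⟩
        rw [Function.update_of_ne (by intro hcon; have := congrArg Fin.val hcon; simp at this; omega), tval1 _ m.isLt]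
      · exact ⟨⟨k - 1, hkn'⟩, Function.update_self _ _ t⟩
  have h_upd_t3 : ∀ i : Fin n, ¬ i.val < k → update t i z = t := by
    intro i hi
    have : t i = z := tval2 i hi
    rw [← this, Function.update_eq_self]
  have h_upd_u2 : ∀ i : Fin n, ¬ i.val < k - 1 → i.val < n - 1 → update u i xk = u := by
    intro i h1 h2
    have : u i = xk := uval2 i h1 h2
    rw [← this, Function.update_eq_self]
  have h_upd_u3 : Set.range (update u ⟨n - 1, hn1⟩ xk) = Set.range x := by
    apply Set.eq_of_subset_of_subset
    · rintro a ⟨j, rfl⟩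
      by_cases hj : j = ⟨n - 1, hn1⟩
      · subst hj; rw [Function.update_self, hxk]; exact ⟨_, rfl⟩
      · rw [Function.update_of_ne hj]
        by_cases h1 : j.val < k - 1
        · rw [uval1 j h1]; exact ⟨_, rfl⟩
        · have h2 : j.val < n - 1 := by
            have : j.val ≠ n - 1 := by intro hcon; exact hj (Fin.ext (by simpa using hcon))
            omega
          rw [uval2 j h1 h2, hxk]; exact ⟨_, rfl⟩
    · rintro a ⟨m, rfl⟩
      by_cases h1 : m.val < k - 1
      · refine ⟨⟨m.val, by omega⟩, ?_⟩
        rw [Function.update_of_ne (by intro hcon; have := congrArg Fin.val hcon; simp at this; omega), uval1 _ h1]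
      · refine ⟨⟨k - 1, hkn'⟩, ?_⟩
        rw [Function.update_of_ne (by intro hcon; have := congrArg Fin.val hcon; simp at this; omega), uval2 _ (show ¬ (k - 1 < k - 1) by omega) (show k - 1 < n - 1 by omega), hxk]
        congr 1; exact Fin.ext (by simp; omega)
  -- cardinalities
  have hcard_lt : ((univ : Finset (Fin n)).filter (fun i => i.val < k - 1)).card = k - 1 :=
    card_filter_lt_fin n (k - 1) (by omega)
  have hcard_ltk : ((univ : Finset (Fin n)).filter (fun i => i.val < k)).card = k :=
    card_filter_lt_fin n k (by omega)
  have hcard_not : ((univ : Finset (Fin n)).filter (fun i => ¬ i.val < k - 1)).card = n - k + 1 := by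
    have h := Finset.card_filter_add_card_filter_not
      (s := (univ : Finset (Fin n))) (p := fun i => i.val < k - 1)
    rw [hcard_lt, Finset.card_univ, Fintype.card_fin] at h
    omega
  have hcard_k : ((univ : Finset (Fin n)).filter (fun i => ¬ i.val < k)).card = n - k := by
    have h := Finset.card_filter_add_card_filter_not
      (s := (univ : Finset (Fin n))) (p := fun i => i.val < k)
    rw [hcard_ltk, Finset.card_univ, Fintype.card_fin] at h
    omega
  have hsplit3 : (univ : Finset (Fin n)).filter (fun i => ¬ i.val < k - 1)
      = insert ⟨k - 1, hkn'⟩ ((univ : Finset (Fin n)).filter (fun i => ¬ i.val < k)) := by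
    ext a
    simp only [Finset.mem_filter, Finset.mem_univ, true_and, Finset.mem_insert, Fin.ext_iff]
    omega
  have hmem3 : (⟨k - 1, hkn'⟩ : Fin n) ∉ (univ : Finset (Fin n)).filter (fun i => ¬ i.val < k) := by
    intro hmem
    exact (Finset.mem_filter.mp hmem).2 (show k - 1 < k by omega)
  have hsplit2 : (univ : Finset (Fin n)).filter (fun i => ¬ i.val < k - 1)
      = insert ⟨n - 1, hn1⟩ ((univ : Finset (Fin n)).filter (fun i => ¬ i.val < k - 1 ∧ i.val < n - 1)) := by
    ext a
    simp only [Finset.mem_filter, Finset.mem_univ, true_and, Finset.mem_insert, Fin.ext_iff]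
    have := a.isLt
    omega
  have hmem2 : (⟨n - 1, hn1⟩ : Fin n) ∉
      (univ : Finset (Fin n)).filter (fun i => ¬ i.val < k - 1 ∧ i.val < n - 1) := by
    intro hmem
    exact absurd ((Finset.mem_filter.mp hmem).2.2) (show ¬ (n - 1 < n - 1) by omega)
  have hcard_mid : ((univ : Finset (Fin n)).filter (fun i => ¬ i.val < k - 1 ∧ i.val < n - 1)).card
      = n - k := by
    have h1 := congrArg Finset.card hsplit2
    rw [Finset.card_insert_of_notMem hmem2, hcard_not] at h1
    omega
  -- casts
  have c1 : ((n - k + 1 : ℕ) : ℝ) = (n : ℝ) - k + 1 := by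
    rw [Nat.cast_add, Nat.cast_sub hkn2.le, Nat.cast_one]
  have c2 : ((n - k : ℕ) : ℝ) = (n : ℝ) - k := Nat.cast_sub hkn2.le
  -- sum computations
  have hsum1 : ∑ i, d (update y i z) = S + ((n - k + 1 : ℕ) : ℝ) * B := by
    rw [← Finset.sum_filter_add_sum_filter_not univ (fun i : Fin n => i.val < k - 1)
      (fun i => d (update y i z))]
    congr 1
    rw [Finset.sum_congr rfl (fun i hi => hrep (update y i z) t
      (((h_upd_y2 i (Finset.mem_filter.mp hi).2)).trans hrt.symm))]
    rw [Finset.sum_const, hcard_not, nsmul_eq_mul, ← hB]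
  have hsum3 : ∑ i, d (update t i z) = S + D + ((n - k : ℕ) : ℝ) * B := by
    rw [← Finset.sum_filter_add_sum_filter_not univ (fun i : Fin n => i.val < k - 1)
      (fun i => d (update t i z))]
    have e1 : ∑ i ∈ Finset.univ.filter (fun i : Fin n => i.val < k - 1), d (update t i z) = S := by
      rw [hS]
      exact Finset.sum_congr rfl (fun i hi => hrep _ _
        ((h_upd_t i (Finset.mem_filter.mp hi).2).trans
          (h_upd_y i (Finset.mem_filter.mp hi).2).symm))
    have e2 : d (update t ⟨k - 1, hkn'⟩ z) = D := by
      rw [hD]; exact hrep _ _ (h_upd_t2.trans hrw.symm)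
    have e3 : ∑ i ∈ Finset.univ.filter (fun i : Fin n => ¬ i.val < k), d (update t i z)
        = ((n - k : ℕ) : ℝ) * B := by
      rw [Finset.sum_congr rfl (fun i hi => by rw [h_upd_t3 i (Finset.mem_filter.mp hi).2]),
        Finset.sum_const, hcard_k, nsmul_eq_mul, ← hB]
    rw [e1, hsplit3, Finset.sum_insert hmem3, e2, e3]
    ring
  have hsum2 : ∑ i, d (update u i xk) = S + A + ((n - k : ℕ) : ℝ) * B := by
    rw [← Finset.sum_filter_add_sum_filter_not univ (fun i : Fin n => i.val < k - 1)
      (fun i => d (update u i xk))]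
    have e1 : ∑ i ∈ Finset.univ.filter (fun i : Fin n => i.val < k - 1), d (update u i xk) = S := by
      rw [hS]
      exact Finset.sum_congr rfl (fun i hi => hrep _ _
        ((h_upd_u i (Finset.mem_filter.mp hi).2).trans
          (h_upd_y i (Finset.mem_filter.mp hi).2).symm))
    have e2 : d (update u ⟨n - 1, hn1⟩ xk) = A := by
      rw [hA]; exact hrep _ _ (h_upd_u3.trans hry.symm)
    have e3 : ∑ i ∈ Finset.univ.filter (fun i : Fin n => ¬ i.val < k - 1 ∧ i.val < n - 1),
        d (update u i xk) = ((n - k : ℕ) : ℝ) * B := by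
      rw [Finset.sum_congr rfl (fun i hi => by
        have h := (Finset.mem_filter.mp hi).2
        rw [h_upd_u2 i h.1 h.2]), Finset.sum_const, hcard_mid, nsmul_eq_mul]
      rw [hrep u t (hru.trans hrt.symm), ← hB]
    rw [e1, hsplit2, Finset.sum_insert hmem2, e2, e3]
    ring
  -- the three key inequalities
  have hN3 : (3 : ℝ) ≤ (n : ℝ) := by exact_mod_cast hn
  have hNpos : (0 : ℝ) < (n : ℝ) - 1 := by linarith
  have F1 : ((n : ℝ) - 1) * A ≤ S + ((n : ℝ) - k + 1) * B := by
    have h := hstd y z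
    rw [hsum1, c1, ← hA] at h
    have h2 := mul_le_mul_of_nonneg_left h hNpos.le
    calc ((n : ℝ) - 1) * A ≤ ((n : ℝ) - 1) * (1 / ((n : ℝ) - 1) * (S + ((n : ℝ) - k + 1) * B)) := h2
      _ = S + ((n : ℝ) - k + 1) * B := by field_simp
  have F3 : ((k : ℝ) - 1) * B ≤ S + D := by
    have h := hstd t z
    rw [hsum3, c2, ← hB] at h
    have h2 := mul_le_mul_of_nonneg_left h hNpos.le
    have h3 : ((n : ℝ) - 1) * B ≤ S + D + ((n : ℝ) - k) * B := by
      calc ((n : ℝ) - 1) * B ≤ ((n : ℝ) - 1) * (1 / ((n : ℝ) - 1) * (S + D + ((n : ℝ) - k) * B)) := h2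
        _ = S + D + ((n : ℝ) - k) * B := by field_simp
    linarith [h3]
  have F2 : ((k : ℝ) - 1) * B ≤ S + A := by
    have h := hstd u xk
    rw [hsum2, c2, hrep u t (hru.trans hrt.symm), ← hB] at h
    have h2 := mul_le_mul_of_nonneg_left h hNpos.le
    have h3 : ((n : ℝ) - 1) * B ≤ S + A + ((n : ℝ) - k) * B := by
      calc ((n : ℝ) - 1) * B ≤ ((n : ℝ) - 1) * (1 / ((n : ℝ) - 1) * (S + A + ((n : ℝ) - k) * B)) := h2
        _ = S + A + ((n : ℝ) - k) * B := by field_simp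
    linarith [h3]
  -- final combination
  have hK2 : (2 : ℝ) ≤ (k : ℝ) := by exact_mod_cast hk2
  have hKN : (k : ℝ) + 1 ≤ (n : ℝ) := by exact_mod_cast (show k + 1 ≤ n by omega)
  have hPle : (p : ℝ) ≤ (n : ℝ) - k := by
    have h : (p : ℝ) ≤ ((n - k : ℕ) : ℝ) := by exact_mod_cast hp
    rwa [c2] at h
  have hP0 : (0 : ℝ) ≤ (p : ℝ) := Nat.cast_nonneg p
  have hE : (0 : ℝ) < ((k : ℝ) - 1) * ((k : ℝ) + (p : ℝ) - 1) := by nlinarith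
  rw [div_mul_eq_mul_div, div_mul_eq_mul_div, ← add_div, le_div_iff₀ hE]
  have p1 := mul_le_mul_of_nonneg_left F1
    (show (0 : ℝ) ≤ ((k : ℝ) - 1) * ((k : ℝ) + (p : ℝ)) by nlinarith)
  have p2 := mul_le_mul_of_nonneg_left F2
    (show (0 : ℝ) ≤ ((k : ℝ) - 1) * ((n : ℝ) - (k : ℝ) - (p : ℝ)) by nlinarith)
  have p3 := mul_le_mul_of_nonneg_left F3
    (show (0 : ℝ) ≤ (n : ℝ) * ((p : ℝ) + 1) by nlinarith)
  have hNpos2 : (0 : ℝ) < (n : ℝ) := by linarith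
  have key : (n : ℝ) * (A * (((k : ℝ) - 1) * ((k : ℝ) + (p : ℝ) - 1)))
      ≤ (n : ℝ) * (((k : ℝ) + (p : ℝ)) * S + ((p : ℝ) + 1) * D) := by
    linarith [p1, p2, p3]
  have hfin := le_of_mul_le_mul_left key hNpos2
  linarith
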